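/- Let n ≥ 1, ε > 0, let D be an ε-smooth distribution on a sample of n points with labels y : Fin n → ℝ taking values in {−1,1}, let H be a nonempty set of hypotheses Fin n → ℝ taking values in {−1,1}, and let opt = inf over h' ∈ H of the empirical error |{i : h'(i) ≠ y(i)}|/n. Suppose β ∈ [0,1/2), ε ≥ 2·opt/(1/2−β), and suppose h : Fin n → ℝ (with values in {−1,1}) satisfies the weak agnostic guarantee ∑_{i : h(i) ≠ y(i)} D(i) ≤ (inf over h' ∈ H of ∑_{i : h'(i) ≠ y(i)} D(i)) + β. Then ∑_{i : h(i) ≠ y(i)} D(i) ≤ 1/2 − (1/2)·(1/2 − β). -/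

import Mathlib

/-- `D` is a probability distribution on `Fin n`. -/
def IsDistribution {n : ℕ} (D : Fin n → ℝ) : Prop :=
  (∀ i, 0 ≤ D i) ∧ ∑ i, D i = 1

/-- `D` is `ε`-smooth: every coordinate is at most `1/(ε·n)`. -/
def IsSmooth {n : ℕ} (ε : ℝ) (D : Fin n → ℝ) : Prop :=
  ∀ i, D i ≤ 1 / (ε * n)

/-- Under ε-smooth distributions with ε ≥ 2·err_S(H)/(1/2−β), a β-weak
agnostic learner is a γ-weak learner with γ ≥ (1/2)·(1/2−β). -/
theorem agnostic_learner_is_weak_learner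
    (n : ℕ) (hn : 1 ≤ n) (ε : ℝ) (hε : 0 < ε)
    (y : Fin n → ℝ) (hy : ∀ i, y i = -1 ∨ y i = 1)
    (D : Fin n → ℝ) (hD : IsDistribution D) (hsmooth : IsSmooth ε D)
    (H : Set (Fin n → ℝ)) (hHne : H.Nonempty)
    (hHval : ∀ h' ∈ H, ∀ i, h' i = -1 ∨ h' i = 1)
    (opt : ℝ)
    (hopt : opt = sInf ((fun h' : Fin n → ℝ =>
      ((Finset.univ.filter (fun i => h' i ≠ y i)).card : ℝ) / n) '' H))
    (β : ℝ) (hβ0 : 0 ≤ β) (hβ : β < 1 / 2)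
    (hεopt : ε ≥ 2 * opt / (1 / 2 - β))
    (h : Fin n → ℝ) (hhval : ∀ i, h i = -1 ∨ h i = 1)
    (hweak : ∑ i ∈ Finset.univ.filter (fun i => h i ≠ y i), D i ≤
      sInf ((fun h' : Fin n → ℝ =>
        ∑ i ∈ Finset.univ.filter (fun i => h' i ≠ y i), D i) '' H) + β) :
    ∑ i ∈ Finset.univ.filter (fun i => h i ≠ y i), D i ≤
      1 / 2 - (1 / 2) * (1 / 2 - β) := by
  have hn0 : (0:ℝ) < n := by exact_mod_cast hn
  have hbal : 0 < 1/2 - β := by linarith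
  set A := ((fun h' : Fin n → ℝ =>
      ∑ i ∈ Finset.univ.filter (fun i => h' i ≠ y i), D i) '' H) with hA
  have hAne : A.Nonempty := hHne.image _
  have hAbdd : BddBelow A := by
    refine ⟨0, ?_⟩
    rintro x ⟨h', hh', rfl⟩
    exact Finset.sum_nonneg fun i _ => hD.1 i
  have key : ∀ h' ∈ H, ε * sInf A ≤
      ((Finset.univ.filter (fun i => h' i ≠ y i)).card : ℝ) / n := by
    intro h' hh'
    have h1 : sInf A ≤ ∑ i ∈ Finset.univ.filter (fun i => h' i ≠ y i), D i :=
      csInf_le hAbdd ⟨h', hh', rfl⟩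
    have h2 : ∑ i ∈ Finset.univ.filter (fun i => h' i ≠ y i), D i ≤
        ((Finset.univ.filter (fun i => h' i ≠ y i)).card : ℝ) * (1/(ε*n)) := by
      have := Finset.sum_le_card_nsmul (Finset.univ.filter (fun i => h' i ≠ y i)) D
        (1/(ε*n)) (fun i _ => hsmooth i)
      simpa [nsmul_eq_mul] using this
    have hεn : 0 < ε * n := mul_pos hε hn0
    have h3 : ε * (((Finset.univ.filter (fun i => h' i ≠ y i)).card : ℝ) * (1/(ε*n)))
        = ((Finset.univ.filter (fun i => h' i ≠ y i)).card : ℝ) / n := by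
      field_simp
    calc ε * sInf A ≤ ε * (((Finset.univ.filter (fun i => h' i ≠ y i)).card : ℝ) * (1/(ε*n))) := by
          apply mul_le_mul_of_nonneg_left (le_trans h1 h2) hε.le
      _ = _ := h3
  have hBne : ((fun h' : Fin n → ℝ =>
      ((Finset.univ.filter (fun i => h' i ≠ y i)).card : ℝ) / n) '' H).Nonempty :=
    hHne.image _
  have hopt_ge : ε * sInf A ≤ opt := by
    rw [hopt]
    apply le_csInf hBne
    rintro x ⟨h', hh', rfl⟩
    exact key h' hh'
  have h2opt : 2 * opt ≤ ε * (1/2 - β) := by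
    have := (div_le_iff₀ hbal).mp hεopt
    linarith
  have hinf : sInf A ≤ (1/2 - β)/2 := by
    have hmul : ε * sInf A ≤ ε * ((1/2 - β)/2) := by linarith
    exact le_of_mul_le_mul_left hmul hε
  have goal : (1:ℝ)/2 - (1/2)*(1/2 - β) = (1/2 - β)/2 + β := by ring
  rw [goal]
  linarith [hweak]
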